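/- Let m be a positive integer and let p be a 321-avoiding permutation of length 2m whose longest increasing subsequence has length m (i.e., p has Robinson–Schensted shape (m,m)). Then f(p), the image of p under the Claesson–Kitaev map, has a unique longest increasing subsequence, namely the sequence of its m+1 left-to-right maxima. -/

import Mathlib

/-- `s` is the index set of an increasing subsequence of the word `f`. -/
def IsIncSubseq {n : ℕ} {α : Type*} [Preorder α] (f : Fin n → α) (s : Finset (Fin n)) : Prop :=
  ∀ i ∈ s, ∀ j ∈ s, i < j → f i < f j

/-- `f` has a unique longest increasing subsequence. -/
def HasULIS {n : ℕ} {α : Type*} [Preorder α] (f : Fin n → α) : Prop :=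
  ∃! s : Finset (Fin n), IsIncSubseq f s ∧
    ∀ t : Finset (Fin n), IsIncSubseq f t → t.card ≤ s.card

/-- `p` contains the pattern `q`. -/
def Contains {k n : ℕ} (q : Equiv.Perm (Fin k)) (p : Equiv.Perm (Fin n)) : Prop :=
  ∃ f : Fin k → Fin n, StrictMono f ∧ ∀ a b : Fin k, p (f a) < p (f b) ↔ q a < q b

/-- `p` avoids the pattern `q`. -/
def Avoids {k n : ℕ} (q : Equiv.Perm (Fin k)) (p : Equiv.Perm (Fin n)) : Prop :=
  ¬ Contains q p

def pattern321 : Equiv.Perm (Fin 3) := ⟨![2,1,0], ![2,1,0], by decide, by decide⟩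
def pattern231 : Equiv.Perm (Fin 3) := ⟨![1,2,0], ![2,0,1], by decide, by decide⟩
def pattern132 : Equiv.Perm (Fin 3) := ⟨![0,2,1], ![0,2,1], by decide, by decide⟩
def pattern123 : Equiv.Perm (Fin 3) := Equiv.refl (Fin 3)

/-- the number of `q`-avoiding permutations of length `n` with a unique
longest increasing subsequence. -/
noncomputable def uNum {k : ℕ} (q : Equiv.Perm (Fin k)) (n : ℕ) : ℕ :=
  Nat.card {p : Equiv.Perm (Fin n) // Avoids q p ∧ HasULIS ⇑p}

/-- the number of `q`-avoiding involutions of length `n` with a unique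
longest increasing subsequence. -/
noncomputable def iNum {k : ℕ} (q : Equiv.Perm (Fin k)) (n : ℕ) : ℕ :=
  Nat.card {p : Equiv.Perm (Fin n) // p⁻¹ = p ∧ Avoids q p ∧ HasULIS ⇑p}

/-- A permutation is indecomposable if it cannot be cut into a (nonempty) prefix and
a (nonempty) suffix so that every entry of the prefix is smaller than every entry
of the suffix. -/
def Indecomposable {m : ℕ} (w : Equiv.Perm (Fin m)) : Prop :=
  ¬ ∃ j : ℕ, 1 ≤ j ∧ j < m ∧ ∀ a b : Fin m, (a : ℕ) < j → j ≤ (b : ℕ) → w a < w b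

/-- The one-line word of a permutation, with entries in `{1, …, n}`. -/
def wordOf {n : ℕ} (p : Equiv.Perm (Fin n)) : List ℕ :=
  List.ofFn (fun i => (p i : ℕ) + 1)

/-- The entry of the word `w` at (0-based) position `i`. -/
def entry (w : List ℕ) (i : ℕ) : ℕ := w.getD i 0

/-- The entry at position `i` of `w` is a left-to-right maximum. -/
def LTRMaxAt (w : List ℕ) (i : ℕ) : Prop :=
  i < w.length ∧ ∀ j, j < i → entry w j < entry w i

/-- The entry at position `i` of `w` is a right-to-left minimum. -/
def RTLMinAt (w : List ℕ) (i : ℕ) : Prop :=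
  i < w.length ∧ ∀ j, i < j → j < w.length → entry w i < entry w j

/-- The set of "underlined" values for the Claesson–Kitaev map: the left-to-right
maxima lying strictly to the right of the entry `1` that are not right-to-left
minima, together with the newly inserted maximum value `n + 1`. -/
def ckS (w : List ℕ) : Set ℕ :=
  {v | ∃ i, entry w i = v ∧ LTRMaxAt w i ∧ ¬ RTLMinAt w i ∧ w.idxOf 1 < i}
    ∪ {w.length + 1}

open Classical in
/-- The value substitution realizing the cyclic left shift of the underlined values:
each underlined value is replaced by the next larger underlined value, the largest
underlined value being replaced by the smallest one; other values are unchanged. -/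
noncomputable def ckSubst (S : Set ℕ) (v : ℕ) : ℕ :=
  if v ∈ S then (if {u ∈ S | v < u}.Nonempty then sInf {u ∈ S | v < u} else sInf S)
  else v

/-- The Claesson–Kitaev map on words: insert the new maximum value `n + 1`
immediately to the left of the entry `1`, then cyclically shift the underlined
values one position to the left among the underlined positions. -/
noncomputable def ckMap (w : List ℕ) : List ℕ :=
  ((w.take (w.idxOf 1)) ++ (w.length + 1) :: (w.drop (w.idxOf 1))).map
    (ckSubst (ckS w))

/-- `s` is the index set of an increasing subsequence of the word `w`. -/
def WIsInc (w : List ℕ) (s : Finset ℕ) : Prop :=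
  (∀ i ∈ s, i < w.length) ∧ ∀ i ∈ s, ∀ j ∈ s, i < j → entry w i < entry w j

-- ============ new material ============

/-- Bundled hypotheses on the word of our permutation. -/
structure GoodWord (m : ℕ) (w : List ℕ) : Prop where
  one_le : 1 ≤ m
  len : w.length = 2*m
  inj : ∀ i, i < 2*m → ∀ j, j < 2*m → entry w i = entry w j → i = j
  lb : ∀ i, i < 2*m → 1 ≤ entry w i
  ub : ∀ i, i < 2*m → entry w i ≤ 2*m
  one_mem : (1 : ℕ) ∈ w
  nodes : ∀ i j k, i < j → j < k → k < 2*m →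
    ¬(entry w j < entry w i ∧ entry w k < entry w j)
  bound : ∀ s : Finset ℕ, WIsInc w s → s.card ≤ m

theorem wordOf_entry {n : ℕ} (p : Equiv.Perm (Fin n)) (i : ℕ) (hi : i < n) :
    entry (wordOf p) i = (p ⟨i, hi⟩ : ℕ) + 1 := by
  have hl : (wordOf p).length = n := by simp [wordOf]
  rw [entry, List.getD_eq_getElem _ _ (by omega)]
  simp [wordOf]

theorem wordOf_length {n : ℕ} (p : Equiv.Perm (Fin n)) : (wordOf p).length = n := by
  simp [wordOf]

theorem goodWord_of (m : ℕ) (hm : 1 ≤ m) (p : Equiv.Perm (Fin (2*m)))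
    (hav : Avoids pattern321 p)
    (hle : ∀ s : Finset (Fin (2 * m)), IsIncSubseq ⇑p s → s.card ≤ m) :
    GoodWord m (wordOf p) := by
  have hn : 0 < 2*m := by omega
  refine ⟨hm, wordOf_length p, ?_, ?_, ?_, ?_, ?_, ?_⟩
  · intro i hi j hj h
    rw [wordOf_entry p i hi, wordOf_entry p j hj] at h
    have : p ⟨i, hi⟩ = p ⟨j, hj⟩ := Fin.ext (by omega)
    exact congrArg Fin.val (p.injective this)
  · intro i hi; rw [wordOf_entry p i hi]; omega
  · intro i hi; rw [wordOf_entry p i hi]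
    have := (p ⟨i, hi⟩).isLt; omega
  · -- 1 ∈ wordOf p
    have hn : 0 < 2*m := by omega
    have hlt : ((p.symm ⟨0, hn⟩ : Fin (2*m)) : ℕ) < (wordOf p).length := by
      rw [wordOf_length]; exact Fin.is_lt _
    have : entry (wordOf p) (p.symm ⟨0, hn⟩ : ℕ) = 1 := by
      rw [wordOf_entry p _ (Fin.is_lt _)]
      simp
    rw [entry, List.getD_eq_getElem _ _ hlt] at this
    exact this ▸ List.getElem_mem hlt
  · rintro i j k hij hjk hk ⟨h1, h2⟩
    apply hav
    have hj : j < 2*m := by omega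
    have hi : i < 2*m := by omega
    rw [wordOf_entry p i hi, wordOf_entry p j hj] at h1
    rw [wordOf_entry p j hj, wordOf_entry p k hk] at h2
    have e1 : (p ⟨j, hj⟩ : ℕ) < p ⟨i, hi⟩ := by omega
    have e2 : (p ⟨k, hk⟩ : ℕ) < p ⟨j, hj⟩ := by omega
    set g : Fin 3 → ℕ := fun a => if a = 0 then i else if a = 1 then j else k with hgdef
    have hg : ∀ a : Fin 3, g a < 2*m := by
      intro a; fin_cases a <;> simp [hgdef] <;> omega
    have hq : ∀ a b : Fin 3, pattern321 a < pattern321 b ↔ (b : ℕ) < (a : ℕ) := by decide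
    refine ⟨fun a => ⟨g a, hg a⟩, ?_, ?_⟩
    · intro a b hab
      rw [Fin.lt_def] at hab
      rw [Fin.mk_lt_mk]
      fin_cases a <;> fin_cases b <;> simp [hgdef] at hab ⊢ <;> omega
    · intro a b
      rw [hq a b, Fin.lt_def]
      fin_cases a <;> fin_cases b <;> simp [hgdef] <;> omega
  · intro s hs
    classical
    have hsub : ∀ x ∈ s, x < 2*m := by
      intro x hx; have := hs.1 x hx; rwa [wordOf_length] at this
    have := hle (s.attachFin hsub) ?_
    · rwa [Finset.card_attachFin] at this
    · intro i hi j hj hij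
      rw [Finset.mem_attachFin] at hi hj
      have := hs.2 i hi j hj hij
      rw [wordOf_entry p i (hsub _ hi), wordOf_entry p j (hsub _ hj)] at this
      simp only [Fin.eta] at this
      exact Fin.lt_def.mpr (by omega)
open Classical

noncomputable def maxSet (w : List ℕ) : Finset ℕ :=
  (Finset.range w.length).filter (fun i => LTRMaxAt w i)

noncomputable def nonSet (w : List ℕ) : Finset ℕ :=
  (Finset.range w.length).filter (fun i => ¬ LTRMaxAt w i)

theorem mem_maxSet {w : List ℕ} {i : ℕ} : i ∈ maxSet w ↔ LTRMaxAt w i := by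
  constructor
  · intro h; exact (Finset.mem_filter.mp h).2
  · intro h; exact Finset.mem_filter.mpr ⟨Finset.mem_range.mpr h.1, h⟩

theorem mem_nonSet {w : List ℕ} {i : ℕ} :
    i ∈ nonSet w ↔ i < w.length ∧ ¬ LTRMaxAt w i := by
  simp [nonSet, Finset.mem_filter]

theorem WIsInc.subset {w : List ℕ} {s t : Finset ℕ} (hst : s ⊆ t) (ht : WIsInc w t) :
    WIsInc w s :=
  ⟨fun i hi => ht.1 i (hst hi), fun i hi j hj hij => ht.2 i (hst hi) j (hst hj) hij⟩

namespace GoodWord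

variable {m : ℕ} {w : List ℕ}

theorem entry_lt_entry (hw : GoodWord m w) {i j : ℕ} (hi : i < 2*m) (hj : j < 2*m)
    (hne : i ≠ j) (h : ¬ entry w j < entry w i) : entry w i < entry w j := by
  rcases Nat.lt_or_ge (entry w i) (entry w j) with h' | h'
  · exact h'
  · exact absurd (hw.inj i hi j hj (Nat.le_antisymm (Nat.le_of_not_lt h) h')) hne

theorem maxSet_inc (hw : GoodWord m w) : WIsInc w (maxSet w) := by
  refine ⟨fun i hi => (mem_maxSet.mp hi).1, fun i hi j hj hij => ?_⟩
  exact (mem_maxSet.mp hj).2 i hij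

theorem nonmax_witness (hw : GoodWord m w) {i : ℕ} (hi : i < 2*m) (h : ¬ LTRMaxAt w i) :
    ∃ j, j < i ∧ entry w i < entry w j := by
  rw [LTRMaxAt] at h
  push_neg at h
  obtain ⟨j, hj, hj2⟩ := h (hw.len ▸ hi)
  exact ⟨j, hj, hw.entry_lt_entry hi (by omega) (by omega) (Nat.not_lt.mpr hj2)⟩

theorem nonSet_inc (hw : GoodWord m w) : WIsInc w (nonSet w) := by
  refine ⟨fun i hi => (mem_nonSet.mp hi).1, fun i hi j hj hij => ?_⟩
  rw [mem_nonSet, hw.len] at hi hj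
  by_contra hc
  have hji : entry w j < entry w i :=
    hw.entry_lt_entry hj.1 hi.1 (by omega) hc
  obtain ⟨j0, hj0, hj0v⟩ := hw.nonmax_witness hi.1 hi.2
  exact hw.nodes j0 i j hj0 hij hj.1 ⟨hj0v, hji⟩

theorem card_maxSet_add (hw : GoodWord m w) :
    (maxSet w).card + (nonSet w).card = 2*m := by
  have : maxSet w ∪ nonSet w = Finset.range w.length := by
    ext i
    simp only [Finset.mem_union, maxSet, nonSet, Finset.mem_filter, Finset.mem_range]
    tauto
  have hd : Disjoint (maxSet w) (nonSet w) := by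
    rw [Finset.disjoint_left]
    intro i hi hi'
    exact (mem_nonSet.mp hi').2 (mem_maxSet.mp hi)
  have hu := Finset.card_union_of_disjoint hd
  rw [this, Finset.card_range, hw.len] at hu
  omega

theorem card_maxSet (hw : GoodWord m w) : (maxSet w).card = m := by
  have h1 := hw.bound _ (maxSet_inc hw)
  have h2 := hw.bound _ (nonSet_inc hw)
  have := hw.card_maxSet_add
  omega

theorem card_nonSet (hw : GoodWord m w) : (nonSet w).card = m := by
  have := hw.card_maxSet_add
  have := hw.card_maxSet
  omega

/-- index of the entry 1 -/
theorem z_lt (hw : GoodWord m w) : w.idxOf 1 < 2*m := by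
  rw [← hw.len]; exact List.idxOf_lt_length_iff.mpr hw.one_mem

theorem entry_z (hw : GoodWord m w) : entry w (w.idxOf 1) = 1 := by
  rw [entry, List.getD_eq_getElem _ _ (hw.len ▸ hw.z_lt)]
  exact List.getElem_idxOf (hw.len ▸ hw.z_lt)

theorem entry_eq_one_iff (hw : GoodWord m w) {i : ℕ} (hi : i < 2*m) :
    entry w i = 1 ↔ i = w.idxOf 1 := by
  constructor
  · intro h; exact hw.inj i hi _ hw.z_lt (h.trans hw.entry_z.symm)
  · intro h; rw [h]; exact hw.entry_z

theorem one_lt_entry (hw : GoodWord m w) {i : ℕ} (hi : i < 2*m)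
    (hne : i ≠ w.idxOf 1) : 1 < entry w i := by
  have := hw.lb i hi
  have := (hw.entry_eq_one_iff hi).not.mpr hne
  omega

/-- every position strictly before the 1 is a left-to-right maximum -/
theorem prefix_max (hw : GoodWord m w) {i : ℕ} (hi : i < w.idxOf 1) :
    LTRMaxAt w i := by
  by_contra h
  have hi2m : i < 2*m := lt_trans hi hw.z_lt
  obtain ⟨j, hj, hjv⟩ := hw.nonmax_witness hi2m h
  refine hw.nodes j i (w.idxOf 1) hj hi hw.z_lt ⟨hjv, ?_⟩
  rw [hw.entry_z]
  exact hw.one_lt_entry hi2m (by omega)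

/-- an increasing subsequence inside `[0, i)` of size at least `⌈i/2⌉` -/
theorem half_prefix (hw : GoodWord m w) (i : ℕ) (hi : i ≤ 2*m) :
    ∃ P : Finset ℕ, WIsInc w P ∧ (∀ x ∈ P, x < i) ∧ (i+1)/2 ≤ P.card := by
  set A := (Finset.range i).filter (fun x => LTRMaxAt w x) with hA
  set B := (Finset.range i).filter (fun x => ¬ LTRMaxAt w x) with hB
  have hAB : A.card + B.card = i := by
    have : A ∪ B = Finset.range i := by
      ext x; simp only [hA, hB, Finset.mem_union, Finset.mem_filter, Finset.mem_range]; tauto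
    have hd : Disjoint A B := by
      rw [Finset.disjoint_left]; intro x hx hx'
      exact (Finset.mem_filter.mp hx').2 (Finset.mem_filter.mp hx).2
    have := Finset.card_union_of_disjoint hd
    rw [‹A ∪ B = _›] at this
    simp only [Finset.card_range] at this
    omega
  rcases Nat.lt_or_ge A.card ((i+1)/2) with hc | hc
  · refine ⟨B, WIsInc.subset ?_ (nonSet_inc hw), fun x hx => Finset.mem_range.mp (Finset.mem_filter.mp hx).1, by omega⟩
    intro x hx
    rw [hB, Finset.mem_filter, Finset.mem_range] at hx
    rw [mem_nonSet, hw.len]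
    exact ⟨by omega, hx.2⟩
  · refine ⟨A, WIsInc.subset ?_ (maxSet_inc hw), fun x hx => Finset.mem_range.mp (Finset.mem_filter.mp hx).1, hc⟩
    intro x hx
    rw [hA, Finset.mem_filter, Finset.mem_range] at hx
    exact mem_maxSet.mpr hx.2

theorem half_suffix (hw : GoodWord m w) (i : ℕ) :
    ∃ Q : Finset ℕ, WIsInc w Q ∧ (∀ x ∈ Q, i < x ∧ x < 2*m) ∧ (2*m - i)/2 ≤ Q.card := by
  set R := (Finset.range (2*m)).filter (fun x => i < x) with hR
  set A := R.filter (fun x => LTRMaxAt w x) with hA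
  set B := R.filter (fun x => ¬ LTRMaxAt w x) with hB
  have hmemR : ∀ x, x ∈ R ↔ (i < x ∧ x < 2*m) := by
    intro x; simp only [hR, Finset.mem_filter, Finset.mem_range]; tauto
  have hRcard : R.card = 2*m - i - 1 ∨ (R.card = 2*m - i ∧ 2*m ≤ i) := by
    have : R = Finset.Ico (i+1) (2*m) := by
      ext x; rw [hmemR, Finset.mem_Ico]; omega
    rw [this, Nat.card_Ico]; omega
  have hAB : A.card + B.card = R.card := by
    have : A ∪ B = R := by
      ext x; simp only [hA, hB, Finset.mem_union, Finset.mem_filter]; tauto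
    have hd : Disjoint A B := by
      rw [Finset.disjoint_left]; intro x hx hx'
      exact (Finset.mem_filter.mp hx').2 (Finset.mem_filter.mp hx).2
    have hu := Finset.card_union_of_disjoint hd
    rw [this] at hu; omega
  rcases Nat.lt_or_ge A.card ((2*m - i)/2) with hc | hc
  · refine ⟨B, WIsInc.subset ?_ (nonSet_inc hw),
      fun x hx => (hmemR x).mp (Finset.mem_filter.mp hx).1, by omega⟩
    intro x hx
    rw [hB, Finset.mem_filter, hmemR] at hx
    rw [mem_nonSet, hw.len]
    exact ⟨hx.1.2, hx.2⟩
  · refine ⟨A, WIsInc.subset ?_ (maxSet_inc hw),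
      fun x hx => (hmemR x).mp (Finset.mem_filter.mp hx).1, hc⟩
    intro x hx
    rw [hA, Finset.mem_filter] at hx
    exact mem_maxSet.mpr hx.2

theorem max_not_rtlmin (hw : GoodWord m w) {i : ℕ} (hmax : LTRMaxAt w i) :
    ¬ RTLMinAt w i := by
  intro hmin
  have hi : i < 2*m := hw.len ▸ hmax.1
  obtain ⟨P, hPinc, hPlt, hPcard⟩ := hw.half_prefix i (by omega)
  obtain ⟨Q, hQinc, hQgt, hQcard⟩ := hw.half_suffix i
  set s := (P ∪ {i}) ∪ Q with hs
  have hmem : ∀ x, x ∈ s ↔ (x ∈ P ∨ x = i ∨ x ∈ Q) := by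
    intro x; simp only [hs, Finset.mem_union, Finset.mem_singleton]; tauto
  have hvP : ∀ x ∈ P, entry w x < entry w i := fun x hx => hmax.2 x (hPlt x hx)
  have hvQ : ∀ x ∈ Q, entry w i < entry w x := fun x hx =>
    hmin.2 x (hQgt x hx).1 (hw.len ▸ (hQgt x hx).2)
  have hinc : WIsInc w s := by
    constructor
    · intro x hx
      rcases (hmem x).mp hx with h | h | h
      · exact hPinc.1 x h
      · exact h ▸ hmax.1
      · rw [hw.len]; exact (hQgt x h).2
    · intro a ha b hb hab
      rcases (hmem a).mp ha with h1 | h1 | h1 <;> rcases (hmem b).mp hb with h2 | h2 | h2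
      · exact hPinc.2 a h1 b h2 hab
      · exact h2 ▸ hvP a h1
      · exact lt_trans (hvP a h1) (hvQ b h2)
      · exact absurd (hPlt b h2) (by omega)
      · omega
      · exact h1 ▸ hvQ b h2
      · exact absurd hab (by have := (hQgt a h1).1; have := hPlt b h2; omega)
      · exact absurd hab (by have := (hQgt a h1).1; omega)
      · exact hQinc.2 a h1 b h2 hab
  have hcard : m + 1 ≤ s.card := by
    have hd1 : Disjoint P ({i} : Finset ℕ) := by
      rw [Finset.disjoint_right]; intro x hx
      rw [Finset.mem_singleton] at hx
      intro hxP; exact absurd (hPlt x hxP) (by omega)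
    have hd2 : Disjoint (P ∪ {i}) Q := by
      rw [Finset.disjoint_left]; intro x hx hxQ
      have := (hQgt x hxQ).1
      rcases Finset.mem_union.mp hx with h | h
      · exact absurd (hPlt x h) (by omega)
      · rw [Finset.mem_singleton] at h; omega
    rw [hs, Finset.card_union_of_disjoint hd2, Finset.card_union_of_disjoint hd1,
      Finset.card_singleton]
    omega
  have := hw.bound s hinc
  omega

theorem z_pos (hw : GoodWord m w) : 1 ≤ w.idxOf 1 := by
  by_contra h
  have hz0 : w.idxOf 1 = 0 := by omega
  have hmax : LTRMaxAt w 0 := ⟨by rw [hw.len]; have := hw.one_le; omega, fun j hj => absurd hj (by omega)⟩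
  refine hw.max_not_rtlmin hmax ⟨hmax.1, fun j hj hjl => ?_⟩
  have : entry w 0 = 1 := hz0 ▸ hw.entry_z
  rw [this]
  exact hw.one_lt_entry (hw.len ▸ hjl) (by omega)

end GoodWord

/-- the "level" of position `i`: the largest size of an increasing subsequence
ending at position `i`. -/
noncomputable def lvl (w : List ℕ) (i : ℕ) : ℕ :=
  Nat.findGreatest
    (fun k => 0 < k ∧ ∃ s : Finset ℕ, WIsInc w s ∧ i ∈ s ∧ (∀ j ∈ s, j ≤ i) ∧ s.card = k)
    w.length

theorem lvl_base {w : List ℕ} {i : ℕ} (hi : i < w.length) :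
    0 < 1 ∧ ∃ s : Finset ℕ, WIsInc w s ∧ i ∈ s ∧ (∀ j ∈ s, j ≤ i) ∧ s.card = 1 := by
  refine ⟨one_pos, {i}, ⟨?_, ?_⟩, Finset.mem_singleton_self i, ?_, Finset.card_singleton i⟩
  · intro x hx; rw [Finset.mem_singleton] at hx; omega
  · intro a ha b hb hab
    rw [Finset.mem_singleton] at ha hb; omega
  · intro j hj; rw [Finset.mem_singleton] at hj; omega

theorem lvl_pos {w : List ℕ} {i : ℕ} (hi : i < w.length) : 1 ≤ lvl w i :=
  Nat.le_findGreatest (by omega) (lvl_base hi)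

theorem lvl_spec {w : List ℕ} {i : ℕ} (hi : i < w.length) :
    ∃ s : Finset ℕ, WIsInc w s ∧ i ∈ s ∧ (∀ j ∈ s, j ≤ i) ∧ s.card = lvl w i :=
  (Nat.findGreatest_spec (P := fun k => 0 < k ∧ ∃ s : Finset ℕ,
      WIsInc w s ∧ i ∈ s ∧ (∀ j ∈ s, j ≤ i) ∧ s.card = k) (by omega) (lvl_base hi)).2

theorem le_lvl {w : List ℕ} {i : ℕ} {s : Finset ℕ} (hs : WIsInc w s) (his : i ∈ s)
    (hle : ∀ j ∈ s, j ≤ i) : s.card ≤ lvl w i := by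
  refine Nat.le_findGreatest ?_ ⟨Finset.card_pos.mpr ⟨i, his⟩, s, hs, his, hle, rfl⟩
  calc s.card ≤ (Finset.range w.length).card := Finset.card_le_card (by
        intro x hx; exact Finset.mem_range.mpr (hs.1 x hx))
    _ = w.length := Finset.card_range _

namespace GoodWord

variable {m : ℕ} {w : List ℕ}

theorem lvl_le (hw : GoodWord m w) {i : ℕ} (hi : i < 2*m) : lvl w i ≤ m := by
  obtain ⟨s, hs, -, -, hcard⟩ := lvl_spec (w := w) (i := i) (by rw [hw.len]; omega)
  rw [← hcard]; exact hw.bound s hs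

theorem lvl_lt_lvl (hw : GoodWord m w) {i j : ℕ} (hij : i < j) (hj : j < 2*m)
    (hv : entry w i < entry w j) : lvl w i < lvl w j := by
  have hi : i < 2*m := by omega
  obtain ⟨s, hs, his, hsle, hcard⟩ := lvl_spec (w := w) (i := i) (by rw [hw.len]; omega)
  have hjns : j ∉ s := fun h => absurd (hsle j h) (by omega)
  have hinc : WIsInc w (insert j s) := by
    constructor
    · intro x hx
      rcases Finset.mem_insert.mp hx with h | h
      · rw [h, hw.len]; exact hj
      · exact hs.1 x h
    · intro a ha b hb hab
      rcases Finset.mem_insert.mp ha with h1 | h1 <;> rcases Finset.mem_insert.mp hb with h2 | h2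
      · omega
      · exact absurd hab (by have := hsle b h2; omega)
      · rcases Nat.lt_or_ge a i with h | h
        · exact lt_trans (hs.2 a h1 i his h) (h2 ▸ hv)
        · have : a = i := by have := hsle a h1; omega
          rw [this, h2]; exact hv
      · exact hs.2 a h1 b h2 hab
  have := le_lvl hinc (Finset.mem_insert_self j s) (by
    intro x hx
    rcases Finset.mem_insert.mp hx with h | h
    · omega
    · have := hsle x h; omega)
  rw [Finset.card_insert_of_notMem hjns] at this
  omega

theorem same_lvl_desc (hw : GoodWord m w) {i j : ℕ} (hij : i < j) (hj : j < 2*m)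
    (hl : lvl w i = lvl w j) : entry w j < entry w i := by
  by_contra hc
  have := hw.entry_lt_entry (by omega) hj (by omega) hc
  have := hw.lvl_lt_lvl hij hj this
  omega

/-- rank rigidity: in a maximum increasing subsequence, the level of each member
equals its rank in the subsequence. -/
theorem lvl_eq_rank (hw : GoodWord m w) {s : Finset ℕ} (hs : WIsInc w s)
    (hcard : s.card = m) {x : ℕ} (hx : x ∈ s) :
    lvl w x = (s.filter (fun j => j ≤ x)).card := by
  classical
  have hxlen : x < w.length := hs.1 x hx
  have hsplit : (s.filter (fun j => j ≤ x)).card + (s.filter (fun j => x < j)).card = m := by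
    rw [← hcard]
    rw [← Finset.card_union_of_disjoint (by
      rw [Finset.disjoint_left]; intro a ha ha'
      have := (Finset.mem_filter.mp ha).2
      have := (Finset.mem_filter.mp ha').2
      omega)]
    congr 1
    ext a
    simp only [Finset.mem_union, Finset.mem_filter]
    constructor
    · rintro (⟨h, -⟩ | ⟨h, -⟩) <;> exact h
    · intro h; rcases le_or_gt a x with h1 | h1
      · exact Or.inl ⟨h, h1⟩
      · exact Or.inr ⟨h, h1⟩
  have h1 : (s.filter (fun j => j ≤ x)).card ≤ lvl w x :=
    le_lvl (WIsInc.subset (Finset.filter_subset _ _) hs)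
      (Finset.mem_filter.mpr ⟨hx, le_refl x⟩)
      (fun j hj => (Finset.mem_filter.mp hj).2)
  have h2 : lvl w x + (s.filter (fun j => x < j)).card ≤ m := by
    obtain ⟨t, ht, hxt, htle, htcard⟩ := lvl_spec hxlen
    have hd : Disjoint t (s.filter (fun j => x < j)) := by
      rw [Finset.disjoint_left]; intro a ha ha'
      have := htle a ha
      have := (Finset.mem_filter.mp ha').2
      omega
    have hinc : WIsInc w (t ∪ s.filter (fun j => x < j)) := by
      constructor
      · intro a ha
        rcases Finset.mem_union.mp ha with h | h
        · exact ht.1 a h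
        · exact hs.1 a (Finset.filter_subset _ _ h)
      · intro a ha b hb hab
        rcases Finset.mem_union.mp ha with h1 | h1 <;>
          rcases Finset.mem_union.mp hb with h2 | h2
        · exact ht.2 a h1 b h2 hab
        · have hb2 := Finset.mem_filter.mp h2
          have hxb : entry w x < entry w b := hs.2 x hx b hb2.1 hb2.2
          rcases Nat.lt_or_ge a x with h | h
          · exact lt_trans (ht.2 a h1 x hxt h) hxb
          · have : a = x := by have := htle a h1; omega
            rw [this]; exact hxb
        · exact absurd hab (by
            have := htle b h2
            have := (Finset.mem_filter.mp h1).2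
            omega)
        · exact hs.2 a (Finset.filter_subset _ _ h1) b (Finset.filter_subset _ _ h2) hab
    have := hw.bound _ hinc
    rw [Finset.card_union_of_disjoint hd, htcard] at this
    omega
  omega

end GoodWord

noncomputable def fiber (w : List ℕ) (t : ℕ) : Finset ℕ :=
  (Finset.range w.length).filter (fun i => lvl w i = t)

theorem mem_fiber {w : List ℕ} {t i : ℕ} :
    i ∈ fiber w t ↔ i < w.length ∧ lvl w i = t := by
  simp [fiber, Finset.mem_filter]

noncomputable def cpos (w : List ℕ) (t : ℕ) : ℕ :=
  if h : (fiber w t).Nonempty then (fiber w t).min' h else 0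

noncomputable def dpos (w : List ℕ) (t : ℕ) : ℕ :=
  if h : (fiber w t).Nonempty then (fiber w t).max' h else 0

namespace GoodWord

variable {m : ℕ} {w : List ℕ}

theorem fiber_card_le_two (hw : GoodWord m w) (t : ℕ) : (fiber w t).card ≤ 2 := by
  by_contra h
  push_neg at h
  obtain ⟨a, ha, b, hb, c, hc, hab, hac, hbc⟩ := Finset.two_lt_card.mp h
  have key : ∀ x y, x ∈ fiber w t → y ∈ fiber w t → x < y → entry w y < entry w x := by
    intro x y hx hy hxy
    rw [mem_fiber, hw.len] at hx hy
    exact hw.same_lvl_desc hxy hy.1 (hx.2.trans hy.2.symm)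
  have tri : ∀ x y z, x ∈ fiber w t → y ∈ fiber w t → z ∈ fiber w t →
      x < y → y < z → False := by
    intro x y z hx hy hz hxy hyz
    exact hw.nodes x y z hxy hyz (hw.len ▸ (mem_fiber.mp hz).1)
      ⟨key x y hx hy hxy, key y z hy hz hyz⟩
  rcases Nat.lt_trichotomy a b with h1 | h1 | h1
  · rcases Nat.lt_trichotomy b c with h2 | h2 | h2
    · exact tri a b c ha hb hc h1 h2
    · exact hbc h2
    · rcases Nat.lt_trichotomy a c with h3 | h3 | h3
      · exact tri a c b ha hc hb h3 h2
      · exact hac h3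
      · exact tri c a b hc ha hb h3 h1
  · exact hab h1
  · rcases Nat.lt_trichotomy a c with h2 | h2 | h2
    · exact tri b a c hb ha hc h1 h2
    · exact hac h2
    · rcases Nat.lt_trichotomy b c with h3 | h3 | h3
      · exact tri b c a hb hc ha h3 h2
      · exact hbc h3
      · exact tri c b a hc hb ha h3 h1

theorem range_eq_biUnion_fiber (hw : GoodWord m w) :
    Finset.range (2*m) = (Finset.Icc 1 m).biUnion (fiber w) := by
  ext i
  simp only [Finset.mem_range, Finset.mem_biUnion, Finset.mem_Icc, mem_fiber]
  constructor
  · intro hi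
    exact ⟨lvl w i, ⟨lvl_pos (by rw [hw.len]; omega), hw.lvl_le hi⟩,
      by rw [hw.len]; omega, rfl⟩
  · rintro ⟨t, -, hlen, -⟩
    rw [hw.len] at hlen; omega

theorem sum_fiber_card (hw : GoodWord m w) :
    ∑ t ∈ Finset.Icc 1 m, (fiber w t).card = 2*m := by
  classical
  rw [← Finset.card_biUnion, ← hw.range_eq_biUnion_fiber, Finset.card_range]
  intro x hx y hy hxy
  rw [Function.onFun, Finset.disjoint_left]
  intro i hi hi'
  rw [mem_fiber] at hi hi'
  exact hxy (hi.2.symm.trans hi'.2)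

theorem fiber_card (hw : GoodWord m w) {t : ℕ} (ht : t ∈ Finset.Icc 1 m) :
    (fiber w t).card = 2 := by
  by_contra h
  have hlt : (fiber w t).card < 2 := lt_of_le_of_ne (hw.fiber_card_le_two t) h
  have : ∑ u ∈ Finset.Icc 1 m, (fiber w u).card <
      ∑ u ∈ Finset.Icc 1 m, 2 :=
    Finset.sum_lt_sum (fun u _ => hw.fiber_card_le_two u) ⟨t, ht, hlt⟩
  rw [hw.sum_fiber_card, Finset.sum_const, Nat.card_Icc, smul_eq_mul] at this
  omega

theorem fiber_nonempty (hw : GoodWord m w) {t : ℕ} (ht1 : 1 ≤ t) (htm : t ≤ m) :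
    (fiber w t).Nonempty := by
  rw [← Finset.card_pos, hw.fiber_card (Finset.mem_Icc.mpr ⟨ht1, htm⟩)]; omega

theorem cpos_mem (hw : GoodWord m w) {t : ℕ} (ht1 : 1 ≤ t) (htm : t ≤ m) :
    cpos w t ∈ fiber w t := by
  rw [cpos, dif_pos (hw.fiber_nonempty ht1 htm)]
  exact Finset.min'_mem _ _

theorem dpos_mem (hw : GoodWord m w) {t : ℕ} (ht1 : 1 ≤ t) (htm : t ≤ m) :
    dpos w t ∈ fiber w t := by
  rw [dpos, dif_pos (hw.fiber_nonempty ht1 htm)]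
  exact Finset.max'_mem _ _

theorem cpos_lt_dpos (hw : GoodWord m w) {t : ℕ} (ht1 : 1 ≤ t) (htm : t ≤ m) :
    cpos w t < dpos w t := by
  rw [cpos, dpos, dif_pos (hw.fiber_nonempty ht1 htm), dif_pos (hw.fiber_nonempty ht1 htm)]
  exact Finset.min'_lt_max'_of_card _ (by rw [hw.fiber_card (Finset.mem_Icc.mpr ⟨ht1, htm⟩)]; omega)

theorem fiber_eq_pair (hw : GoodWord m w) {t : ℕ} (ht1 : 1 ≤ t) (htm : t ≤ m) :
    fiber w t = {cpos w t, dpos w t} := by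
  refine (Finset.eq_of_subset_of_card_le ?_ ?_).symm
  · intro x hx
    rcases Finset.mem_insert.mp hx with h | h
    · exact h ▸ hw.cpos_mem ht1 htm
    · rw [Finset.mem_singleton] at h; exact h ▸ hw.dpos_mem ht1 htm
  · rw [hw.fiber_card (Finset.mem_Icc.mpr ⟨ht1, htm⟩)]
    rw [Finset.card_insert_of_notMem (by
      rw [Finset.mem_singleton]
      exact Nat.ne_of_lt (hw.cpos_lt_dpos ht1 htm)), Finset.card_singleton]

theorem lvl_cpos (hw : GoodWord m w) {t : ℕ} (ht1 : 1 ≤ t) (htm : t ≤ m) :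
    lvl w (cpos w t) = t := (mem_fiber.mp (hw.cpos_mem ht1 htm)).2

theorem lvl_dpos (hw : GoodWord m w) {t : ℕ} (ht1 : 1 ≤ t) (htm : t ≤ m) :
    lvl w (dpos w t) = t := (mem_fiber.mp (hw.dpos_mem ht1 htm)).2

theorem cpos_lt_len (hw : GoodWord m w) {t : ℕ} (ht1 : 1 ≤ t) (htm : t ≤ m) :
    cpos w t < 2*m := hw.len ▸ (mem_fiber.mp (hw.cpos_mem ht1 htm)).1

theorem dpos_lt_len (hw : GoodWord m w) {t : ℕ} (ht1 : 1 ≤ t) (htm : t ≤ m) :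
    dpos w t < 2*m := hw.len ▸ (mem_fiber.mp (hw.dpos_mem ht1 htm)).1

theorem entry_dpos_lt (hw : GoodWord m w) {t : ℕ} (ht1 : 1 ≤ t) (htm : t ≤ m) :
    entry w (dpos w t) < entry w (cpos w t) :=
  hw.same_lvl_desc (hw.cpos_lt_dpos ht1 htm) (hw.dpos_lt_len ht1 htm)
    ((hw.lvl_cpos ht1 htm).trans (hw.lvl_dpos ht1 htm).symm)

theorem dpos_not_max (hw : GoodWord m w) {t : ℕ} (ht1 : 1 ≤ t) (htm : t ≤ m) :
    ¬ LTRMaxAt w (dpos w t) := by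
  intro h
  exact absurd (h.2 (cpos w t) (hw.cpos_lt_dpos ht1 htm))
    (by have := hw.entry_dpos_lt ht1 htm; omega)

theorem maxSet_eq (hw : GoodWord m w) :
    maxSet w = (Finset.Icc 1 m).image (cpos w) := by
  classical
  refine Finset.eq_of_subset_of_card_le ?_ ?_
  · intro x hx
    have hmax := mem_maxSet.mp hx
    have hx2m : x < 2*m := hw.len ▸ hmax.1
    have ht1 : 1 ≤ lvl w x := lvl_pos hmax.1
    have htm : lvl w x ≤ m := hw.lvl_le hx2m
    have hxf : x ∈ fiber w (lvl w x) := mem_fiber.mpr ⟨hmax.1, rfl⟩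
    rw [hw.fiber_eq_pair ht1 htm] at hxf
    rcases Finset.mem_insert.mp hxf with h | h
    · exact Finset.mem_image.mpr ⟨lvl w x, Finset.mem_Icc.mpr ⟨ht1, htm⟩, h.symm⟩
    · rw [Finset.mem_singleton] at h
      exact absurd hmax (h ▸ hw.dpos_not_max ht1 htm)
  · calc ((Finset.Icc 1 m).image (cpos w)).card ≤ (Finset.Icc 1 m).card :=
        Finset.card_image_le
    _ = m := by rw [Nat.card_Icc]; omega
    _ = (maxSet w).card := hw.card_maxSet.symm

theorem cpos_max (hw : GoodWord m w) {t : ℕ} (ht1 : 1 ≤ t) (htm : t ≤ m) :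
    LTRMaxAt w (cpos w t) := by
  rw [← mem_maxSet, hw.maxSet_eq]
  exact Finset.mem_image.mpr ⟨t, Finset.mem_Icc.mpr ⟨ht1, htm⟩, rfl⟩

theorem cpos_strictMono (hw : GoodWord m w) {t s : ℕ} (ht1 : 1 ≤ t) (hts : t < s)
    (hsm : s ≤ m) : cpos w t < cpos w s := by
  have h1 : 1 ≤ s := by omega
  have h2 : t ≤ m := by omega
  rcases Nat.lt_trichotomy (cpos w t) (cpos w s) with h | h | h
  · exact h
  · exact absurd ((hw.lvl_cpos ht1 h2).symm.trans (h ▸ hw.lvl_cpos h1 hsm)) (by omega)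
  · have := (hw.cpos_max ht1 h2).2 (cpos w s) h
    have := hw.lvl_lt_lvl h (hw.cpos_lt_len ht1 h2) this
    rw [hw.lvl_cpos ht1 h2, hw.lvl_cpos h1 hsm] at this
    omega

theorem entry_cpos_strictMono (hw : GoodWord m w) {t s : ℕ} (ht1 : 1 ≤ t) (hts : t < s)
    (hsm : s ≤ m) : entry w (cpos w t) < entry w (cpos w s) :=
  (hw.cpos_max (by omega) hsm).2 _ (hw.cpos_strictMono ht1 hts hsm)

theorem lvl_le_succ {i : ℕ} (hi : i < w.length) : lvl w i ≤ i + 1 := by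
  obtain ⟨s, hs, his, hle, hcard⟩ := lvl_spec hi
  rw [← hcard]
  calc s.card ≤ (Finset.range (i+1)).card := Finset.card_le_card (by
        intro x hx; exact Finset.mem_range.mpr (by have := hle x hx; omega))
    _ = i + 1 := Finset.card_range _

theorem lvl_prefix (hw : GoodWord m w) {i : ℕ} (hi : i < w.idxOf 1) :
    lvl w i = i + 1 := by
  have hi2m : i < 2*m := by have := hw.z_lt; omega
  refine Nat.le_antisymm (lvl_le_succ (hw.len ▸ hi2m)) ?_
  have hinc : WIsInc w (Finset.range (i+1)) := by
    constructor
    · intro x hx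
      rw [Finset.mem_range] at hx; rw [hw.len]; omega
    · intro a ha b hb hab
      rw [Finset.mem_range] at ha hb
      exact (hw.prefix_max (by omega)).2 a hab
  have := le_lvl (i := i) hinc (Finset.mem_range.mpr (by omega))
    (fun j hj => by have := Finset.mem_range.mp hj; omega)
  rw [Finset.card_range] at this
  exact this

theorem z_le_m (hw : GoodWord m w) : w.idxOf 1 ≤ m := by
  have hz1 := hw.z_pos
  have := hw.lvl_prefix (i := w.idxOf 1 - 1) (by omega)
  have := hw.lvl_le (i := w.idxOf 1 - 1) (by have := hw.z_lt; omega)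
  omega

theorem lvl_z (hw : GoodWord m w) : lvl w (w.idxOf 1) = 1 := by
  have hzlen : w.idxOf 1 < w.length := hw.len ▸ hw.z_lt
  refine Nat.le_antisymm ?_ (lvl_pos hzlen)
  by_contra h
  obtain ⟨s, hs, hzs, hle, hcard⟩ := lvl_spec hzlen
  obtain ⟨x, hxs, hxnz⟩ := Finset.exists_mem_ne (s := s) (by omega) (w.idxOf 1)
  have hxz : x < w.idxOf 1 := by have := hle x hxs; omega
  have := hs.2 x hxs _ hzs hxz
  rw [hw.entry_z] at this
  have := hw.lb x (by have := hw.z_lt; omega)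
  omega

theorem cpos_of_le_z (hw : GoodWord m w) {t : ℕ} (ht1 : 1 ≤ t) (htz : t ≤ w.idxOf 1) :
    cpos w t = t - 1 := by
  have htm : t ≤ m := htz.trans hw.z_le_m
  have hf : t - 1 ∈ fiber w t := by
    rw [mem_fiber, hw.len]
    constructor
    · have := hw.z_lt; omega
    · have := hw.lvl_prefix (i := t - 1) (by omega); omega
  rw [hw.fiber_eq_pair ht1 htm] at hf
  rcases Finset.mem_insert.mp hf with h | h
  · omega
  · rw [Finset.mem_singleton] at h
    exact absurd (hw.prefix_max (show (t:ℕ) - 1 < w.idxOf 1 by omega))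
      (h ▸ hw.dpos_not_max ht1 htm)

theorem z_le_dpos (hw : GoodWord m w) {t : ℕ} (ht1 : 1 ≤ t) (htm : t ≤ m) :
    w.idxOf 1 ≤ dpos w t := by
  by_contra h
  exact hw.dpos_not_max ht1 htm (hw.prefix_max (by omega))

theorem z_lt_dpos (hw : GoodWord m w) {t : ℕ} (ht1 : 2 ≤ t) (htm : t ≤ m) :
    w.idxOf 1 < dpos w t := by
  have h1 := hw.z_le_dpos (by omega) htm
  have h2 : dpos w t ≠ w.idxOf 1 := by
    intro h
    have := hw.lvl_dpos (by omega) htm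
    rw [h, hw.lvl_z] at this
    omega
  omega

theorem z_lt_cpos (hw : GoodWord m w) {t : ℕ} (htz : w.idxOf 1 < t) (htm : t ≤ m) :
    w.idxOf 1 < cpos w t := by
  have ht1 : 1 ≤ t := by have := hw.z_pos; omega
  rcases Nat.lt_trichotomy (cpos w t) (w.idxOf 1) with h | h | h
  · have := hw.lvl_prefix h
    rw [hw.lvl_cpos ht1 htm] at this
    omega
  · have := hw.lvl_cpos ht1 htm
    rw [h, hw.lvl_z] at this
    have := hw.z_pos
    omega
  · exact h

end GoodWord

namespace GoodWord

variable {m : ℕ} {w : List ℕ}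

theorem mem_ckS_iff (hw : GoodWord m w) {u : ℕ} :
    u ∈ ckS w ↔
      (∃ t, w.idxOf 1 < t ∧ t ≤ m ∧ u = entry w (cpos w t)) ∨ u = 2*m + 1 := by
  constructor
  · intro h
    rcases h with ⟨i, hei, hmax, -, hzi⟩ | h
    · left
      have hiM : i ∈ maxSet w := mem_maxSet.mpr hmax
      rw [hw.maxSet_eq] at hiM
      obtain ⟨t, htIcc, hct⟩ := Finset.mem_image.mp hiM
      rw [Finset.mem_Icc] at htIcc
      refine ⟨t, ?_, htIcc.2, by rw [hct, hei]⟩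
      by_contra hc
      have := hw.cpos_of_le_z htIcc.1 (by omega)
      omega
    · right
      rw [Set.mem_singleton_iff] at h
      rw [h, hw.len]
  · intro h
    rcases h with ⟨t, hzt, htm, hu⟩ | h
    · left
      have ht1 : 1 ≤ t := by have := hw.z_pos; omega
      exact ⟨cpos w t, hu.symm, hw.cpos_max ht1 htm,
        hw.max_not_rtlmin (hw.cpos_max ht1 htm), hw.z_lt_cpos hzt htm⟩
    · right
      rw [Set.mem_singleton_iff, h, hw.len]

theorem aval_lt_of_lt (hw : GoodWord m w) {t s : ℕ} (ht1 : 1 ≤ t) (hts : t < s) (hsm : s ≤ m) :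
    entry w (cpos w t) < entry w (cpos w s) := hw.entry_cpos_strictMono ht1 hts hsm

theorem aval_le_of_le (hw : GoodWord m w) {t s : ℕ} (ht1 : 1 ≤ t) (hts : t ≤ s) (hsm : s ≤ m) :
    entry w (cpos w t) ≤ entry w (cpos w s) := by
  rcases Nat.lt_or_ge t s with h | h
  · exact le_of_lt (hw.aval_lt_of_lt ht1 h hsm)
  · have : t = s := by omega
    rw [this]

theorem aval_le (hw : GoodWord m w) {t : ℕ} (ht1 : 1 ≤ t) (htm : t ≤ m) :
    entry w (cpos w t) ≤ 2*m := hw.ub _ (hw.cpos_lt_len ht1 htm)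

theorem subst_of_not_mem {S : Set ℕ} {u : ℕ} (h : u ∉ S) : ckSubst S u = u := by
  rw [ckSubst, if_neg h]

theorem entry_mem_ckS_iff (hw : GoodWord m w) {j : ℕ} (hj : j < 2*m) :
    entry w j ∈ ckS w ↔ ∃ t, w.idxOf 1 < t ∧ t ≤ m ∧ j = cpos w t := by
  rw [hw.mem_ckS_iff]
  constructor
  · intro h
    rcases h with ⟨t, hzt, htm, he⟩ | h
    · have ht1 : 1 ≤ t := by have := hw.z_pos; omega
      exact ⟨t, hzt, htm, hw.inj j hj _ (hw.cpos_lt_len ht1 htm) he⟩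
    · have := hw.ub j hj; omega
  · rintro ⟨t, hzt, htm, he⟩
    exact Or.inl ⟨t, hzt, htm, by rw [he]⟩

theorem subst_entry_nonmax (hw : GoodWord m w) {j : ℕ} (hj : j < 2*m)
    (h : ∀ t, w.idxOf 1 < t → t ≤ m → j ≠ cpos w t) :
    ckSubst (ckS w) (entry w j) = entry w j := by
  apply subst_of_not_mem
  rw [hw.entry_mem_ckS_iff hj]
  rintro ⟨t, hzt, htm, he⟩
  exact h t hzt htm he

theorem subst_aval (hw : GoodWord m w) {t : ℕ} (hzt : w.idxOf 1 < t) (htm : t < m) :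
    ckSubst (ckS w) (entry w (cpos w t)) = entry w (cpos w (t+1)) := by
  have ht1 : 1 ≤ t := by have := hw.z_pos; omega
  have hmem : entry w (cpos w t) ∈ ckS w :=
    (hw.mem_ckS_iff).mpr (Or.inl ⟨t, hzt, by omega, rfl⟩)
  have hnext : entry w (cpos w (t+1)) ∈ {u ∈ ckS w | entry w (cpos w t) < u} :=
    ⟨(hw.mem_ckS_iff).mpr (Or.inl ⟨t+1, by omega, by omega, rfl⟩),
      hw.aval_lt_of_lt ht1 (by omega) (by omega)⟩
  rw [ckSubst, if_pos hmem, if_pos ⟨_, hnext⟩]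
  refine Nat.le_antisymm (Nat.sInf_le hnext) ?_
  obtain ⟨hS, hgt⟩ := Nat.sInf_mem (⟨_, hnext⟩ :
    {u ∈ ckS w | entry w (cpos w t) < u}.Nonempty)
  rcases (hw.mem_ckS_iff).mp hS with ⟨s, hzs, hsm, he⟩ | h
  · rw [he] at hgt ⊢
    have hs1 : 1 ≤ s := by have := hw.z_pos; omega
    have hts : t < s := by
      rcases Nat.lt_or_ge t s with h' | h'
      · exact h'
      · exact absurd hgt (by
          have := hw.aval_le_of_le hs1 h' (le_of_lt htm); omega)
    exact hw.aval_le_of_le (by omega) (by omega) hsm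
  · rw [h]
    have := hw.aval_le (t := t+1) (by omega) (by omega)
    omega

theorem subst_aval_top (hw : GoodWord m w) (hzm : w.idxOf 1 < m) :
    ckSubst (ckS w) (entry w (cpos w m)) = 2*m + 1 := by
  have hmem : entry w (cpos w m) ∈ ckS w :=
    (hw.mem_ckS_iff).mpr (Or.inl ⟨m, hzm, le_refl m, rfl⟩)
  have hnext : (2*m+1) ∈ {u ∈ ckS w | entry w (cpos w m) < u} :=
    ⟨(hw.mem_ckS_iff).mpr (Or.inr rfl), by have := hw.aval_le (t := m) (by omega) (le_refl m); omega⟩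
  rw [ckSubst, if_pos hmem, if_pos ⟨_, hnext⟩]
  refine Nat.le_antisymm (Nat.sInf_le hnext) ?_
  obtain ⟨hS, hgt⟩ := Nat.sInf_mem (⟨_, hnext⟩ :
    {u ∈ ckS w | entry w (cpos w m) < u}.Nonempty)
  rcases (hw.mem_ckS_iff).mp hS with ⟨s, hzs, hsm, he⟩ | h
  · rw [he] at hgt
    have hs1 : 1 ≤ s := by have := hw.z_pos; omega
    exact absurd (hw.aval_le_of_le hs1 hsm (le_refl m)) (by omega)
  · omega

theorem subst_top (hw : GoodWord m w) (hzm : w.idxOf 1 < m) :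
    ckSubst (ckS w) (2*m + 1) = entry w (cpos w (w.idxOf 1 + 1)) := by
  have hmem : (2*m+1 : ℕ) ∈ ckS w := (hw.mem_ckS_iff).mpr (Or.inr rfl)
  have hemp : ¬ {u ∈ ckS w | 2*m+1 < u}.Nonempty := by
    rintro ⟨u, huS, hu⟩
    rcases (hw.mem_ckS_iff).mp huS with ⟨s, hzs, hsm, he⟩ | h
    · have hs1 : 1 ≤ s := by have := hw.z_pos; omega
      have := hw.aval_le hs1 hsm
      omega
    · omega
  rw [ckSubst, if_pos hmem, if_neg hemp]
  have hfirst : entry w (cpos w (w.idxOf 1 + 1)) ∈ ckS w :=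
    (hw.mem_ckS_iff).mpr (Or.inl ⟨w.idxOf 1 + 1, by omega, by omega, rfl⟩)
  refine Nat.le_antisymm (Nat.sInf_le hfirst) ?_
  obtain hS := Nat.sInf_mem (⟨_, hmem⟩ : (ckS w).Nonempty)
  rcases (hw.mem_ckS_iff).mp hS with ⟨s, hzs, hsm, he⟩ | h
  · rw [he]
    have hs1 : 1 ≤ s := by have := hw.z_pos; omega
    exact hw.aval_le_of_le (by omega) (by omega) hsm
  · rw [h]
    have := hw.aval_le (t := w.idxOf 1 + 1) (by omega) (by omega)
    omega

theorem subst_top_self (hw : GoodWord m w) (hzm : w.idxOf 1 = m) :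
    ckSubst (ckS w) (2*m + 1) = 2*m + 1 := by
  have hmem : (2*m+1 : ℕ) ∈ ckS w := (hw.mem_ckS_iff).mpr (Or.inr rfl)
  have hemp : ¬ {u ∈ ckS w | 2*m+1 < u}.Nonempty := by
    rintro ⟨u, huS, hu⟩
    rcases (hw.mem_ckS_iff).mp huS with ⟨s, hzs, hsm, he⟩ | h
    · have hs1 : 1 ≤ s := by have := hw.z_pos; omega
      have := hw.aval_le hs1 hsm
      omega
    · omega
  rw [ckSubst, if_pos hmem, if_neg hemp]
  refine Nat.le_antisymm (Nat.sInf_le hmem) ?_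
  obtain hS := Nat.sInf_mem (⟨_, hmem⟩ : (ckS w).Nonempty)
  rcases (hw.mem_ckS_iff).mp hS with ⟨s, hzs, hsm, he⟩ | h
  · omega
  · omega

/-- the substitution does not decrease values of actual entries -/
theorem subst_ge_entry (hw : GoodWord m w) {j : ℕ} (hj : j < 2*m) :
    entry w j ≤ ckSubst (ckS w) (entry w j) := by
  by_cases h : entry w j ∈ ckS w
  · obtain ⟨t, hzt, htm, he⟩ := (hw.entry_mem_ckS_iff hj).mp h
    rw [he]
    rcases Nat.lt_or_ge t m with hlt | hge
    · rw [hw.subst_aval hzt hlt]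
      exact le_of_lt (hw.aval_lt_of_lt (by have := hw.z_pos; omega) (by omega) (by omega))
    · have : t = m := by omega
      rw [this] at hzt ⊢
      rw [hw.subst_aval_top hzt]
      have := hw.aval_le (t := m) (by omega) (le_refl m)
      omega
  · rw [subst_of_not_mem h]

theorem subst_entry_le (hw : GoodWord m w) {j : ℕ} (hj : j < 2*m) :
    ckSubst (ckS w) (entry w j) ≤ 2*m + 1 := by
  by_cases h : entry w j ∈ ckS w
  · obtain ⟨t, hzt, htm, he⟩ := (hw.entry_mem_ckS_iff hj).mp h
    rw [he]
    rcases Nat.lt_or_ge t m with hlt | hge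
    · rw [hw.subst_aval hzt hlt]
      have := hw.aval_le (t := t+1) (by omega) (by omega)
      omega
    · have : t = m := by omega
      rw [this] at hzt ⊢
      rw [hw.subst_aval_top hzt]
  · rw [subst_of_not_mem h]
    have := hw.ub j hj
    omega

end GoodWord

namespace GoodWord

variable {m : ℕ} {w : List ℕ}

theorem ckMap_length (hw : GoodWord m w) : (ckMap w).length = 2*m + 1 := by
  have hz := hw.z_lt
  rw [ckMap, List.length_map, List.length_append, List.length_take, List.length_cons,
    List.length_drop, hw.len]
  omega

theorem entry_ckMap (hw : GoodWord m w) {i : ℕ} (hi : i ≤ 2*m) :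
    entry (ckMap w) i =
      if i < w.idxOf 1 then entry w i
      else if i = w.idxOf 1 then ckSubst (ckS w) (2*m+1)
      else ckSubst (ckS w) (entry w (i-1)) := by
  have hz := hw.z_lt
  have hlen : i < (ckMap w).length := by rw [hw.ckMap_length]; omega
  have hlen0 : i < ((w.take (w.idxOf 1)) ++ (w.length + 1) :: (w.drop (w.idxOf 1))).length := by
    rw [List.length_append, List.length_take, List.length_cons, List.length_drop, hw.len]
    omega
  have htake : (w.take (w.idxOf 1)).length = w.idxOf 1 := by
    rw [List.length_take, hw.len]; omega
  rw [entry, List.getD_eq_getElem _ _ hlen]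
  have hck : ckMap w = ((w.take (w.idxOf 1)) ++ (w.length + 1) :: (w.drop (w.idxOf 1))).map
      (ckSubst (ckS w)) := rfl
  simp only [hck, List.getElem_map]
  rcases Nat.lt_trichotomy i (w.idxOf 1) with h | h | h
  · rw [if_pos h]
    have h1 : i < (w.take (w.idxOf 1)).length := by omega
    have hiw : i < w.length := by rw [hw.len]; omega
    rw [List.getElem_append_left h1, List.getElem_take]
    have : w[i] = entry w i := by
      rw [entry, List.getD_eq_getElem _ _ (by rw [hw.len]; omega)]
    rw [this]
    apply hw.subst_entry_nonmax (by omega)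
    intro t hzt htm
    have := hw.z_lt_cpos hzt htm
    omega
  · rw [if_neg (by omega), if_pos h]
    rw [List.getElem_append_right (by omega)]
    have : i - (w.take (w.idxOf 1)).length = 0 := by omega
    simp only [this, List.getElem_cons_zero, hw.len]
  · rw [if_neg (by omega), if_neg (by omega)]
    rw [List.getElem_append_right (by omega)]
    have h1 : i - (w.take (w.idxOf 1)).length = (i - w.idxOf 1 - 1) + 1 := by omega
    simp only [h1, List.getElem_cons_succ, List.getElem_drop]
    have h2 : w.idxOf 1 + (i - w.idxOf 1 - 1) = i - 1 := by omega
    have h3 : ∀ (a : ℕ) (ha : a < w.length), w[a] = entry w a := by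
      intro a ha; rw [entry, List.getD_eq_getElem _ _ ha]
    congr 1
    rw [h3 (w.idxOf 1 + (i - w.idxOf 1 - 1)) (by rw [hw.len]; omega), h2]

theorem entry_ckMap_of_lt (hw : GoodWord m w) {i : ℕ} (hi : i < w.idxOf 1) :
    entry (ckMap w) i = entry w i := by
  rw [hw.entry_ckMap (by have := hw.z_lt; omega), if_pos hi]

theorem entry_ckMap_z (hw : GoodWord m w) :
    entry (ckMap w) (w.idxOf 1) = ckSubst (ckS w) (2*m+1) := by
  rw [hw.entry_ckMap (by have := hw.z_lt; omega), if_neg (by omega), if_pos rfl]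

theorem entry_ckMap_of_gt (hw : GoodWord m w) {i : ℕ} (hz : w.idxOf 1 < i) (hi : i ≤ 2*m) :
    entry (ckMap w) i = ckSubst (ckS w) (entry w (i-1)) := by
  rw [hw.entry_ckMap hi, if_neg (by omega), if_neg (by omega)]

/-- value of the new maximum at a shifted underlined position -/
theorem entry_ckMap_shift (hw : GoodWord m w) {t : ℕ} (hzt : w.idxOf 1 < t) (htm : t ≤ m) :
    entry (ckMap w) (cpos w t + 1) =
      if t < m then entry w (cpos w (t+1)) else 2*m+1 := by
  have ht1 : 1 ≤ t := by have := hw.z_pos; omega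
  have hc := hw.z_lt_cpos hzt htm
  have hclen := hw.cpos_lt_len ht1 htm
  rw [hw.entry_ckMap_of_gt (by omega) (by omega)]
  simp only [Nat.add_sub_cancel]
  rcases Nat.lt_or_ge t m with h | h
  · rw [if_pos h, hw.subst_aval hzt h]
  · have : t = m := by omega
    rw [if_neg (by omega), this, hw.subst_aval_top (this ▸ hzt)]

theorem aval_lt_entry_ckMap_shift (hw : GoodWord m w) {t : ℕ} (hzt : w.idxOf 1 < t)
    (htm : t ≤ m) : entry w (cpos w t) < entry (ckMap w) (cpos w t + 1) := by
  rw [hw.entry_ckMap_shift hzt htm]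
  rcases Nat.lt_or_ge t m with h | h
  · rw [if_pos h]
    exact hw.aval_lt_of_lt (by have := hw.z_pos; omega) (by omega) (by omega)
  · rw [if_neg (by omega)]
    have := hw.aval_le (t := t) (by have := hw.z_pos; omega) htm
    omega

theorem ckMax_of_le_z (hw : GoodWord m w) {i : ℕ} (hi : i ≤ w.idxOf 1) :
    LTRMaxAt (ckMap w) i := by
  have hz := hw.z_lt
  have hzm := hw.z_le_m
  constructor
  · rw [hw.ckMap_length]; omega
  · intro j hj
    have hjz : j < w.idxOf 1 := by omega
    rw [hw.entry_ckMap_of_lt hjz]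
    rcases Nat.lt_or_ge i (w.idxOf 1) with h | h
    · rw [hw.entry_ckMap_of_lt h]
      exact (hw.prefix_max h).2 j hj
    · have hiz : i = w.idxOf 1 := by omega
      rw [hiz, hw.entry_ckMap_z]
      rcases Nat.lt_or_ge (w.idxOf 1) m with h' | h'
      · rw [hw.subst_top h']
        refine (hw.cpos_max (t := w.idxOf 1 + 1) (by omega) (by omega)).2 j ?_
        have := hw.z_lt_cpos (t := w.idxOf 1 + 1) (by omega) (by omega)
        omega
      · have : w.idxOf 1 = m := by omega
        rw [hw.subst_top_self this]
        have h2 := hw.ub j (show j < 2*m by omega)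
        omega

theorem ckMax_shift (hw : GoodWord m w) {t : ℕ} (hzt : w.idxOf 1 < t) (htm : t ≤ m) :
    LTRMaxAt (ckMap w) (cpos w t + 1) := by
  have ht1 : 1 ≤ t := by have := hw.z_pos; omega
  have hc := hw.z_lt_cpos hzt htm
  have hclen := hw.cpos_lt_len ht1 htm
  have hA := hw.aval_lt_entry_ckMap_shift hzt htm
  constructor
  · rw [hw.ckMap_length]; omega
  · intro j hj
    rcases Nat.lt_trichotomy j (w.idxOf 1) with h | h | h
    · rw [hw.entry_ckMap_of_lt h]
      have : entry w j < entry w (cpos w t) := (hw.cpos_max ht1 htm).2 j (by omega)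
      omega
    · rw [h, hw.entry_ckMap_z]
      have hzm : w.idxOf 1 < m := by omega
      rw [hw.subst_top hzm]
      have : entry w (cpos w (w.idxOf 1 + 1)) ≤ entry w (cpos w t) :=
        hw.aval_le_of_le (by omega) (by omega) htm
      omega
    · -- w.idxOf 1 < j < cpos t + 1
      have hj1 : j - 1 < cpos w t := by omega
      have hj2m : j - 1 < 2*m := by omega
      by_cases hcs : ∃ s, w.idxOf 1 < s ∧ s ≤ m ∧ j - 1 = cpos w s
      · obtain ⟨s, hzs, hsm, he⟩ := hcs
        have hst : s < t := by
          rcases Nat.lt_trichotomy s t with h' | h' | h'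
          · exact h'
          · exact absurd he (by rw [h']; omega)
          · exact absurd (hw.cpos_strictMono ht1 h' hsm) (by omega)
        have hj' : j = cpos w s + 1 := by omega
        have hEs : entry (ckMap w) j = entry w (cpos w (s+1)) := by
          rw [hj', hw.entry_ckMap_shift hzs hsm, if_pos (by omega)]
        rw [hEs]
        have : entry w (cpos w (s+1)) ≤ entry w (cpos w t) :=
          hw.aval_le_of_le (by omega) (by omega) htm
        omega
      · push_neg at hcs
        rw [hw.entry_ckMap_of_gt h (by omega), hw.subst_entry_nonmax hj2m hcs]
        have : entry w (j-1) < entry w (cpos w t) := (hw.cpos_max ht1 htm).2 (j-1) hj1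
        omega

end GoodWord

theorem T_inc (W : List ℕ) :
    WIsInc W ((Finset.range W.length).filter (fun i => LTRMaxAt W i)) := by
  constructor
  · intro i hi; exact Finset.mem_range.mp (Finset.mem_filter.mp hi).1
  · intro i hi j hj hij
    exact ((Finset.mem_filter.mp hj).2).2 i hij

namespace GoodWord

variable {m : ℕ} {w : List ℕ}

theorem entry_ckMap_one (hw : GoodWord m w) :
    entry (ckMap w) (w.idxOf 1 + 1) = 1 := by
  have hz := hw.z_lt
  rw [hw.entry_ckMap_of_gt (by omega) (by omega)]
  simp only [Nat.add_sub_cancel]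
  rw [hw.subst_entry_nonmax hz (fun t hzt htm => by
    have := hw.z_lt_cpos hzt htm; omega), hw.entry_z]

theorem ckNotMax (hw : GoodWord m w) {i : ℕ} (hz : w.idxOf 1 < i) (hi : i ≤ 2*m)
    (h : ∀ t, w.idxOf 1 < t → t ≤ m → i - 1 ≠ cpos w t) :
    ¬ LTRMaxAt (ckMap w) i := by
  intro hmax
  have hzpos := hw.z_pos
  have hzlt := hw.z_lt
  rcases Nat.lt_or_ge (w.idxOf 1) (i - 1) with hcase | hcase
  · -- i - 1 is a non-maximum of w
    have hi1 : i - 1 < 2*m := by omega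
    have hnm : ¬ LTRMaxAt w (i-1) := by
      intro hm
      have := mem_maxSet.mpr hm
      rw [hw.maxSet_eq] at this
      obtain ⟨t, htIcc, hct⟩ := Finset.mem_image.mp this
      rw [Finset.mem_Icc] at htIcc
      rcases Nat.lt_or_ge (w.idxOf 1) t with h' | h'
      · exact h t h' htIcc.2 hct.symm
      · have := hw.cpos_of_le_z htIcc.1 h'
        omega
    obtain ⟨j, hji, hjv⟩ := hw.nonmax_witness hi1 hnm
    have hWi : entry (ckMap w) i = entry w (i-1) :=
      (hw.entry_ckMap_of_gt hz hi).trans (hw.subst_entry_nonmax hi1 (fun t hzt htm => h t hzt htm))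
    rcases Nat.lt_or_ge j (w.idxOf 1) with hjz | hjz
    · have := hmax.2 j (by omega)
      rw [hw.entry_ckMap_of_lt hjz, hWi] at this
      omega
    · have := hmax.2 (j+1) (by omega)
      rw [hw.entry_ckMap_of_gt (by omega) (by omega), hWi] at this
      simp only [Nat.add_sub_cancel] at this
      have := hw.subst_ge_entry (j := j) (by omega)
      omega
  · -- i = z + 1, the old position of the entry 1
    have hiz : i = w.idxOf 1 + 1 := by omega
    have h1 := hw.entry_ckMap_one
    have := hmax.2 0 (by omega)
    rw [hiz, h1, hw.entry_ckMap_of_lt (by omega)] at this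
    have := hw.lb 0 (by omega)
    omega

theorem ckMax_iff (hw : GoodWord m w) {i : ℕ} :
    LTRMaxAt (ckMap w) i ↔
      (i ≤ w.idxOf 1 ∨ ∃ t, w.idxOf 1 < t ∧ t ≤ m ∧ i = cpos w t + 1) := by
  constructor
  · intro hmax
    have hi : i ≤ 2*m := by have := hmax.1; rw [hw.ckMap_length] at this; omega
    rcases Nat.lt_or_ge (w.idxOf 1) i with h' | h'
    · right
      by_contra hc
      push_neg at hc
      exact hw.ckNotMax h' hi (fun t hzt htm he => hc t hzt htm (by omega)) hmax
    · left; omega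
  · intro h
    rcases h with h | ⟨t, hzt, htm, he⟩
    · exact hw.ckMax_of_le_z h
    · exact he ▸ hw.ckMax_shift hzt htm

theorem TSet_eq (hw : GoodWord m w) :
    (Finset.range (ckMap w).length).filter (fun i => LTRMaxAt (ckMap w) i)
      = (Finset.range (w.idxOf 1 + 1)) ∪
        (Finset.Ioc (w.idxOf 1) m).image (fun t => cpos w t + 1) := by
  classical
  ext i
  simp only [Finset.mem_filter, Finset.mem_range, Finset.mem_union, Finset.mem_image,
    Finset.mem_Ioc]
  constructor
  · rintro ⟨hlen, hmax⟩
    rcases hw.ckMax_iff.mp hmax with h | ⟨t, hzt, htm, he⟩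
    · left; omega
    · right; exact ⟨t, ⟨hzt, htm⟩, he.symm⟩
  · intro h
    have hmax : LTRMaxAt (ckMap w) i := by
      apply hw.ckMax_iff.mpr
      rcases h with h | ⟨t, ⟨hzt, htm⟩, he⟩
      · left; omega
      · right; exact ⟨t, hzt, htm, he.symm⟩
    exact ⟨hmax.1, hmax⟩

theorem TSet_card (hw : GoodWord m w) :
    ((Finset.range (ckMap w).length).filter (fun i => LTRMaxAt (ckMap w) i)).card
      = m + 1 := by
  classical
  rw [hw.TSet_eq]
  have hzpos := hw.z_pos
  have hzm := hw.z_le_m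
  have hd : Disjoint (Finset.range (w.idxOf 1 + 1))
      ((Finset.Ioc (w.idxOf 1) m).image (fun t => cpos w t + 1)) := by
    rw [Finset.disjoint_left]
    intro x hx hx'
    obtain ⟨t, ht, he⟩ := Finset.mem_image.mp hx'
    rw [Finset.mem_Ioc] at ht
    have := hw.z_lt_cpos ht.1 ht.2
    rw [Finset.mem_range] at hx
    omega
  rw [Finset.card_union_of_disjoint hd, Finset.card_range,
    Finset.card_image_of_injOn, Nat.card_Ioc]
  · omega
  · intro a ha b hb hab
    rw [Finset.coe_Ioc, Set.mem_Ioc] at ha hb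
    simp only [add_left_inj] at hab
    rcases Nat.lt_trichotomy a b with h | h | h
    · exact absurd (hw.cpos_strictMono (by omega) h hb.2) (by omega)
    · exact h
    · exact absurd (hw.cpos_strictMono (by omega) h ha.2) (by omega)

end GoodWord

namespace GoodWord

variable {m : ℕ} {w : List ℕ}

theorem entry_ckMap_pull (hw : GoodWord m w) {i : ℕ} (hi : i ≤ 2*m) (hne : i ≠ w.idxOf 1) :
    entry (ckMap w) i =
      ckSubst (ckS w) (entry w (if i < w.idxOf 1 then i else i - 1)) := by
  rcases Nat.lt_or_ge i (w.idxOf 1) with h | h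
  · rw [if_pos h, hw.entry_ckMap_of_lt h, hw.subst_entry_nonmax
      (by have := hw.z_lt; omega)
      (fun t hzt htm => by have := hw.z_lt_cpos hzt htm; omega)]
  · rw [if_neg (by omega), hw.entry_ckMap_of_gt (by omega) hi]

theorem pull_reflect (hw : GoodWord m w) {a b : ℕ} (ha : a < 2*m) (hb : b < 2*m)
    (hab : a < b)
    (hv : ckSubst (ckS w) (entry w a) < ckSubst (ckS w) (entry w b)) :
    entry w a < entry w b := by
  by_contra hc
  have hba : entry w b < entry w a := hw.entry_lt_entry hb ha (by omega) hc
  by_cases hbS : entry w b ∈ ckS w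
  · obtain ⟨t, hzt, htm, he⟩ := (hw.entry_mem_ckS_iff hb).mp hbS
    have := (hw.cpos_max (by have := hw.z_pos; omega) htm).2 a (he ▸ hab)
    rw [← he] at this
    omega
  · rw [subst_of_not_mem hbS] at hv
    have := hw.subst_ge_entry ha
    omega

theorem pullback (hw : GoodWord m w) {s : Finset ℕ} (hs : WIsInc (ckMap w) s) :
    WIsInc w ((s.erase (w.idxOf 1)).image
        (fun i => if i < w.idxOf 1 then i else i - 1)) ∧
      ((s.erase (w.idxOf 1)).image
        (fun i => if i < w.idxOf 1 then i else i - 1)).card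
        = (s.erase (w.idxOf 1)).card := by
  classical
  have hzpos := hw.z_pos
  have hzlt := hw.z_lt
  have hel : ∀ i ∈ s.erase (w.idxOf 1), i ≤ 2*m ∧ i ≠ w.idxOf 1 ∧ i ∈ s := by
    intro i hi
    have h1 := Finset.mem_erase.mp hi
    have := hs.1 i h1.2
    rw [hw.ckMap_length] at this
    exact ⟨by omega, h1.1, h1.2⟩
  have hinj : Set.InjOn (fun i => if i < w.idxOf 1 then i else i - 1)
      ↑(s.erase (w.idxOf 1)) := by
    intro a ha b hb hab
    obtain ⟨-, ha2, -⟩ := hel a ha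
    obtain ⟨-, hb2, -⟩ := hel b hb
    simp only at hab
    split_ifs at hab <;> omega
  refine ⟨⟨?_, ?_⟩, Finset.card_image_of_injOn hinj⟩
  · intro x hx
    obtain ⟨i, hi, he⟩ := Finset.mem_image.mp hx
    obtain ⟨h1, h2, -⟩ := hel i hi
    rw [hw.len, ← he]
    split_ifs <;> omega
  · intro x hx y hy hxy
    obtain ⟨i, hi, hie⟩ := Finset.mem_image.mp hx
    obtain ⟨j, hj, hje⟩ := Finset.mem_image.mp hy
    obtain ⟨hi1, hi2, hi3⟩ := hel i hi
    obtain ⟨hj1, hj2, hj3⟩ := hel j hj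
    have hx2m : x < 2*m := by rw [← hie]; split_ifs <;> omega
    have hy2m : y < 2*m := by rw [← hje]; split_ifs <;> omega
    have hij : i < j := by
      rcases Nat.lt_or_ge i j with h | h
      · exact h
      · exfalso
        have : y ≤ x := by
          rw [← hie, ← hje]; split_ifs <;> omega
        omega
    have hWij := hs.2 i hi3 j hj3 hij
    rw [hw.entry_ckMap_pull hi1 hi2, hw.entry_ckMap_pull hj1 hj2, hie, hje] at hWij
    exact hw.pull_reflect hx2m hy2m hxy hWij

theorem ckMap_bound (hw : GoodWord m w) {s : Finset ℕ} (hs : WIsInc (ckMap w) s) :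
    s.card ≤ m + 1 := by
  classical
  obtain ⟨hinc, hcard⟩ := hw.pullback hs
  have := hw.bound _ hinc
  have herase : s.card ≤ (s.erase (w.idxOf 1)).card + 1 := by
    by_cases h : w.idxOf 1 ∈ s
    · rw [Finset.card_erase_of_mem h]; omega
    · rw [Finset.erase_eq_of_notMem h]; omega
  omega

end GoodWord

namespace GoodWord

variable {m : ℕ} {w : List ℕ}

theorem dpos_ne_cpos (hw : GoodWord m w) {t s : ℕ} (ht1 : 1 ≤ t) (htm : t ≤ m)
    (hs1 : 1 ≤ s) (hsm : s ≤ m) : dpos w t ≠ cpos w s := by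
  intro h
  have h1 := hw.lvl_dpos ht1 htm
  have h2 := hw.lvl_cpos hs1 hsm
  rw [h] at h1
  have hts : t = s := h1.symm.trans h2
  have h3 : dpos w t = cpos w t := by rw [h, ← hts]
  have := hw.cpos_lt_dpos ht1 htm
  omega

theorem entry_ckMap_dpos (hw : GoodWord m w) {t : ℕ} (ht1 : 1 ≤ t) (htm : t ≤ m)
    (hzd : w.idxOf 1 < dpos w t) :
    entry (ckMap w) (dpos w t + 1) = entry w (dpos w t) := by
  have hd2m := hw.dpos_lt_len ht1 htm
  rw [hw.entry_ckMap_of_gt (by omega) (by omega)]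
  simp only [Nat.add_sub_cancel]
  exact hw.subst_entry_nonmax hd2m (fun u hzu hum => hw.dpos_ne_cpos ht1 htm
    (by have := hw.z_pos; omega) hum)

theorem entry_ckMap_z_gt_one (hw : GoodWord m w) : 1 < entry (ckMap w) (w.idxOf 1) := by
  rw [hw.entry_ckMap_z]
  rcases Nat.lt_or_ge (w.idxOf 1) m with h | h
  · rw [hw.subst_top h]
    have h1 : cpos w (w.idxOf 1 + 1) ≠ w.idxOf 1 := by
      have := hw.z_lt_cpos (t := w.idxOf 1 + 1) (by omega) (by omega)
      omega
    exact hw.one_lt_entry (hw.cpos_lt_len (by omega) (by omega)) h1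
  · have hzm : w.idxOf 1 = m := by have := hw.z_le_m; omega
    rw [hw.subst_top_self hzm]
    have := hw.one_le
    omega

theorem ckMap_unique (hw : GoodWord m w) {s : Finset ℕ} (hs : WIsInc (ckMap w) s)
    (hmax : ∀ t : Finset ℕ, WIsInc (ckMap w) t → t.card ≤ s.card) :
    s = (Finset.range (ckMap w).length).filter (fun i => LTRMaxAt (ckMap w) i) := by
  classical
  have hzpos := hw.z_pos
  have hzlt := hw.z_lt
  have hzm := hw.z_le_m
  set T := (Finset.range (ckMap w).length).filter (fun i => LTRMaxAt (ckMap w) i) with hT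
  have hTcard : T.card = m + 1 := hw.TSet_card
  have hscard : s.card = m + 1 := by
    have h1 := hw.ckMap_bound hs
    have h2 := hmax T (T_inc (ckMap w))
    omega
  have hsel : ∀ i ∈ s, i ≤ 2*m := by
    intro i hi
    have := hs.1 i hi
    rw [hw.ckMap_length] at this
    omega
  obtain ⟨hinc', hcard'⟩ := hw.pullback hs
  set s' := (s.erase (w.idxOf 1)).image
    (fun i => if i < w.idxOf 1 then i else i - 1) with hs'
  -- the index of 1 must belong to s
  have hzs : w.idxOf 1 ∈ s := by
    by_contra h
    rw [Finset.erase_eq_of_notMem h] at hcard'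
    have := hw.bound _ hinc'
    omega
  have hs'card : s'.card = m := by
    rw [hcard', Finset.card_erase_of_mem hzs, hscard]
    omega
  have hs'len : ∀ x ∈ s', x < 2*m := by
    intro x hx
    have := hinc'.1 x hx
    rwa [hw.len] at this
  -- membership transfer facts
  have hpush : ∀ x ∈ s', w.idxOf 1 < x → x + 1 ∈ s := by
    intro x hx hzx
    obtain ⟨i, hi, he⟩ := Finset.mem_image.mp hx
    obtain ⟨hine, his⟩ := Finset.mem_erase.mp hi
    by_cases h : i < w.idxOf 1
    · rw [if_pos h] at he; omega
    · rw [if_neg h] at he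
      have : i = x + 1 := by omega
      exact this ▸ his
  have hznots' : w.idxOf 1 ∉ s' := by
    intro h
    obtain ⟨i, hi, he⟩ := Finset.mem_image.mp h
    obtain ⟨hine, his⟩ := Finset.mem_erase.mp hi
    have hiz : i = w.idxOf 1 + 1 := by
      by_cases hlt : i < w.idxOf 1
      · rw [if_pos hlt] at he; omega
      · rw [if_neg hlt] at he; omega
    have h1 := hs.2 (w.idxOf 1) hzs i his (by omega)
    rw [hiz, hw.entry_ckMap_one] at h1
    have := hw.entry_ckMap_z_gt_one
    omega
  have hlvlmono : ∀ x ∈ s', ∀ y ∈ s', x < y → lvl w x < lvl w y := fun x hx y hy hxy =>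
    hw.lvl_lt_lvl hxy (hs'len y hy) (hinc'.2 x hx y hy hxy)
  have hE : s'.image (lvl w) = Finset.Icc 1 m := by
    apply Finset.eq_of_subset_of_card_le
    · intro t ht
      obtain ⟨x, hx, he⟩ := Finset.mem_image.mp ht
      rw [Finset.mem_Icc, ← he]
      exact ⟨lvl_pos (hinc'.1 x hx), hw.lvl_le (hs'len x hx)⟩
    · rw [Nat.card_Icc, Finset.card_image_of_injOn, hs'card]
      · omega
      · intro x hx y hy hxy
        rcases Nat.lt_trichotomy x y with h | h | h
        · exact absurd (hlvlmono x hx y hy h) (by omega)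
        · exact h
        · exact absurd (hlvlmono y hy x hx h) (by omega)
  have hsurj : ∀ t, 1 ≤ t → t ≤ m → ∃ x ∈ s', lvl w x = t := by
    intro t ht1 htm
    have : t ∈ s'.image (lvl w) := hE ▸ Finset.mem_Icc.mpr ⟨ht1, htm⟩
    exact Finset.mem_image.mp this
  have key : ∀ t, 1 ≤ t → t ≤ m → cpos w t ∈ s' := by
    intro t
    induction t using Nat.strong_induction_on with
    | _ t IH =>
    intro ht1 htm
    obtain ⟨x, hxs', hlx⟩ := hsurj t ht1 htm
    have hx2m := hs'len x hxs'
    have hxf : x ∈ fiber w t := mem_fiber.mpr ⟨by rw [hw.len]; omega, hlx⟩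
    rw [hw.fiber_eq_pair ht1 htm] at hxf
    rcases Finset.mem_insert.mp hxf with hxc | hxd
    · exact hxc ▸ hxs'
    rw [Finset.mem_singleton] at hxd
    exfalso
    have hds' : dpos w t ∈ s' := hxd ▸ hxs'
    by_cases ht_one : t = 1
    · have hzf : w.idxOf 1 ∈ fiber w 1 := mem_fiber.mpr ⟨hw.len ▸ hzlt, hw.lvl_z⟩
      rw [hw.fiber_eq_pair (le_refl 1) hw.one_le] at hzf
      have hd1 : dpos w 1 = w.idxOf 1 := by
        rcases Finset.mem_insert.mp hzf with h | h
        · have := hw.cpos_of_le_z (le_refl 1) hzpos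
          omega
        · rw [Finset.mem_singleton] at h; omega
      exact hznots' (hd1 ▸ (ht_one ▸ hds'))
    have ht2 : 2 ≤ t := by omega
    have hzd : w.idxOf 1 < dpos w t := hw.z_lt_dpos ht2 htm
    have his : dpos w t + 1 ∈ s := hpush _ hds' hzd
    have hWi : entry (ckMap w) (dpos w t + 1) = entry w (dpos w t) :=
      hw.entry_ckMap_dpos ht1 htm hzd
    by_cases htz : t ≤ w.idxOf 1 + 1
    · have hcmp := hs.2 (w.idxOf 1) hzs (dpos w t + 1) his (by omega)
      rw [hWi, hw.entry_ckMap_z] at hcmp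
      have hb : entry w (dpos w t) < entry w (cpos w t) := hw.entry_dpos_lt ht1 htm
      rcases Nat.lt_or_ge (w.idxOf 1) m with hzmlt | hzmge
      · rw [hw.subst_top hzmlt] at hcmp
        have : entry w (cpos w t) ≤ entry w (cpos w (w.idxOf 1 + 1)) :=
          hw.aval_le_of_le ht1 (by omega) (by omega)
        omega
      · have hzem : w.idxOf 1 = m := by omega
        rw [hw.subst_top_self hzem] at hcmp
        have := hw.ub (dpos w t) (hw.dpos_lt_len ht1 htm)
        omega
    · have hzt : w.idxOf 1 < t - 1 := by omega
      have hc' : cpos w (t-1) ∈ s' := IH (t-1) (by omega) (by omega) (by omega)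
      have hcd : cpos w (t-1) < dpos w t := by
        rcases Nat.lt_trichotomy (cpos w (t-1)) (dpos w t) with h | h | h
        · exact h
        · exact absurd h.symm (hw.dpos_ne_cpos ht1 htm (by omega) (by omega))
        · have := hlvlmono _ hds' _ hc' h
          rw [hw.lvl_dpos ht1 htm, hw.lvl_cpos (by omega) (by omega)] at this
          omega
      have hjs : cpos w (t-1) + 1 ∈ s := hpush _ hc' (hw.z_lt_cpos hzt (by omega))
      have hcmp := hs.2 (cpos w (t-1) + 1) hjs (dpos w t + 1) his (by omega)
      rw [hWi, hw.entry_ckMap_shift hzt (by omega), if_pos (by omega)] at hcmp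
      have hsucc : t - 1 + 1 = t := by omega
      rw [hsucc] at hcmp
      have := hw.entry_dpos_lt ht1 htm
      omega
  have hmax_sub : maxSet w ⊆ s' := by
    intro x hx
    rw [hw.maxSet_eq] at hx
    obtain ⟨t, htIcc, he⟩ := Finset.mem_image.mp hx
    rw [Finset.mem_Icc] at htIcc
    exact he ▸ key t htIcc.1 htIcc.2
  have hs'max : s' = maxSet w :=
    (Finset.eq_of_subset_of_card_le hmax_sub (by rw [hw.card_maxSet, hs'card])).symm
  apply Finset.eq_of_subset_of_card_le ?_ (by rw [hTcard, hscard])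
  intro i his
  have hile := hsel i his
  rw [hT, Finset.mem_filter, Finset.mem_range, hw.ckMap_length]
  refine ⟨by omega, ?_⟩
  apply hw.ckMax_iff.mpr
  by_cases hiz : i ≤ w.idxOf 1
  · left; exact hiz
  · right
    push_neg at hiz
    have hie : i ≠ w.idxOf 1 := by omega
    have hpull : i - 1 ∈ s' := Finset.mem_image.mpr
      ⟨i, Finset.mem_erase.mpr ⟨hie, his⟩, by rw [if_neg (by omega)]⟩
    rw [hs'max, hw.maxSet_eq] at hpull
    obtain ⟨t, htIcc, he⟩ := Finset.mem_image.mp hpull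
    rw [Finset.mem_Icc] at htIcc
    have hzt : w.idxOf 1 < t := by
      by_contra hc
      have := hw.cpos_of_le_z htIcc.1 (by omega)
      omega
    exact ⟨t, hzt, htIcc.2, by omega⟩

end GoodWord

open Classical in
/-- If `p` is a 321-avoiding permutation of length `2m` whose longest increasing
subsequence has length `m`, then `f(p)` has a unique longest increasing subsequence,
namely the sequence of its `m + 1` left-to-right maxima. -/
theorem ckMap_hasULIS (m : ℕ) (hm : 1 ≤ m)
    (p : Equiv.Perm (Fin (2 * m))) (hav : Avoids pattern321 p)
    (hex : ∃ s : Finset (Fin (2 * m)), IsIncSubseq ⇑p s ∧ s.card = m)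
    (hle : ∀ s : Finset (Fin (2 * m)), IsIncSubseq ⇑p s → s.card ≤ m) :
    ∀ T : Finset ℕ,
      T = (Finset.range (ckMap (wordOf p)).length).filter
            (fun i => LTRMaxAt (ckMap (wordOf p)) i) →
      (WIsInc (ckMap (wordOf p)) T ∧
        ∀ t : Finset ℕ, WIsInc (ckMap (wordOf p)) t → t.card ≤ T.card) ∧
      T.card = m + 1 ∧
      ∀ s : Finset ℕ, WIsInc (ckMap (wordOf p)) s →
        (∀ t : Finset ℕ, WIsInc (ckMap (wordOf p)) t → t.card ≤ s.card) → s = T := by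
  intro T hTdef
  have hw : GoodWord m (wordOf p) := goodWord_of m hm p hav hle
  have hcard : T.card = m + 1 := by rw [hTdef]; exact hw.TSet_card
  refine ⟨⟨?_, ?_⟩, hcard, ?_⟩
  · rw [hTdef]; exact T_inc _
  · intro t ht
    rw [hcard]
    exact hw.ckMap_bound ht
  · intro s hsinc hsmax
    rw [hTdef]
    exact hw.ckMap_unique hsinc hsmax
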